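/- Let W be a 4-dimensional real vector space, W = Π₁ ⊕ Π₂ with dim Π₁ = dim Π₂ = 2, let F : Π₁ → Π₂ be a linear isomorphism and L : Π₁ → Π₁ a linear automorphism that is not a real scalar multiple of the identity, and set Π₃ = graph(F), Π₄ = graph(F ∘ L). Then there exists a complex structure J on W for which Π₁, Π₂, Π₃, Π₄ are all complex subspaces if and only if L has no real eigenvalue. -/

import Mathlib

open Module

lemma exists_cstruct {V : Type*} [AddCommGroup V] [Module ℝ V]
    (hV : Module.finrank ℝ V = 2) (L : V →ₗ[ℝ] V)
    (hno : ∀ c : ℝ, ¬ Module.End.HasEigenvalue (L : Module.End ℝ V) c) :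
    ∃ K : V →ₗ[ℝ] V, (∀ x, K (K x) = -x) ∧ ∀ x, K (L x) = L (K x) := by
  have : Nontrivial V := Module.nontrivial_of_finrank_pos (R := ℝ) (by omega)
  obtain ⟨v, hv0⟩ := exists_ne (0 : V)
  have heigvec : ∀ (μ : ℝ) (x : V), x ≠ 0 → L x = μ • x → False := by
    intro μ x hx hLx
    exact hno μ (Module.End.hasEigenvalue_of_hasEigenvector
      (Module.End.hasEigenvector_iff.mpr ⟨Module.End.mem_eigenspace_iff.mpr hLx, hx⟩))
  have li : LinearIndependent ℝ ![v, L v] := by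
    rw [LinearIndependent.pair_iff' hv0]
    intro a hEq
    exact heigvec a v hv0 hEq.symm
  have card : Fintype.card (Fin 2) = Module.finrank ℝ V := by simp [hV]
  set B := basisOfLinearIndependentOfCardEqFinrank li card with hB
  have hBcoe : ⇑B = ![v, L v] := coe_basisOfLinearIndependentOfCardEqFinrank li card
  set α : ℝ := B.repr (L (L v)) 0 with hα
  set β : ℝ := B.repr (L (L v)) 1 with hβ
  have hLL : L (L v) = α • v + β • L v := by
    have := B.sum_repr (L (L v))
    rw [Fin.sum_univ_two] at this
    rw [← this, hBcoe]
    simp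
    rfl
  -- quadratic relation holds everywhere
  have hspan : Submodule.span ℝ (Set.range ![v, L v]) = ⊤ :=
    li.span_eq_top_of_card_eq_finrank card
  have hquad : ∀ x, L (L x) = α • x + β • L x := by
    intro x
    have hx : x ∈ Submodule.span ℝ (Set.range ![v, L v]) := hspan ▸ Submodule.mem_top
    induction hx using Submodule.span_induction with
    | mem y hy =>
        obtain ⟨i, rfl⟩ := hy
        fin_cases i
        · simpa using hLL
        · show L (L (L v)) = α • L v + β • L (L v)
          conv_lhs => rw [hLL]
          rw [map_add, map_smul, map_smul]
    | zero => simp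
    | add y z _ _ hy hz =>
        simp only [map_add, hy, hz, smul_add]; abel
    | smul t y _ hy =>
        simp only [map_smul, hy, smul_add, smul_smul, mul_comm]
  -- discriminant negative
  have hdisc : β ^ 2 + 4 * α < 0 := by
    by_contra hge
    push_neg at hge
    set l : ℝ := (β + Real.sqrt (β ^ 2 + 4 * α)) / 2 with hl
    set m : ℝ := β - l with hm
    have hsq : Real.sqrt (β ^ 2 + 4 * α) ^ 2 = β ^ 2 + 4 * α := Real.sq_sqrt hge
    have hsum : l + m = β := by ring
    have hprod : l * m = -α := by
      have : l * m = l * β - l ^ 2 := by ring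
      rw [this, hl]
      nlinarith [hsq]
    have hfact : ∀ x, L (L x - m • x) = l • (L x - m • x) := by
      intro x
      rw [map_sub, map_smul, hquad]
      have hβ' : β = l + m := hsum.symm
      rw [hβ']
      have hα' : α = -(l * m) := by linarith [hprod]
      rw [hα']
      module
    rcases em (∀ x : V, L x - m • x = 0) with hall | hne
    · exact heigvec m v hv0 (by have := hall v; linear_combination (norm := module) this)
    · push_neg at hne
      obtain ⟨w, hw⟩ := hne
      exact heigvec l (L w - m • w) hw (hfact w)
  -- build K
  set s : ℝ := Real.sqrt (-(β ^ 2 + 4 * α)) with hs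
  have hspos : 0 < s := Real.sqrt_pos.mpr (by linarith)
  have hss : s * s = -(β ^ 2 + 4 * α) := Real.mul_self_sqrt (by linarith)
  refine ⟨s⁻¹ • ((2 : ℝ) • L - β • LinearMap.id), ?_, ?_⟩
  · intro x
    simp only [LinearMap.smul_apply, LinearMap.sub_apply, LinearMap.id_apply, map_sub, map_smul,
      smul_sub, smul_smul]
    rw [hquad]
    have hsne : s ≠ 0 := ne_of_gt hspos
    match_scalars
    · field_simp
      nlinarith [hss]
    · ring
  · intro x
    simp only [LinearMap.smul_apply, LinearMap.sub_apply, LinearMap.id_apply, map_sub, map_smul,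
      smul_sub, smul_smul]



lemma decomp_uniq {W : Type*} [AddCommGroup W] [Module ℝ W]
    {P₁ P₂ : Submodule ℝ W} (hcompl : IsCompl P₁ P₂)
    (a a' : P₁) (b b' : P₂) (h : (a : W) + b = (a' : W) + b') : a = a' ∧ b = b' := by
  have hx : ((a - a' : P₁) : W) = ((b' - b : P₂) : W) := by
    push_cast
    linear_combination (norm := abel) h
  have hmem : ((a - a' : P₁) : W) ∈ P₁ ⊓ P₂ := by
    refine ⟨SetLike.coe_mem _, ?_⟩
    rw [hx]; exact SetLike.coe_mem _
  rw [hcompl.inf_eq_bot] at hmem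
  have h1 : a - a' = 0 := by
    exact_mod_cast Subtype.ext (by simpa using hmem)
  have h2 : b' - b = 0 := by
    apply Subtype.ext
    have := hx.symm.trans (by exact_mod_cast congrArg _ h1)
    simpa using this
  constructor
  · linear_combination (norm := abel) h1
  · linear_combination (norm := abel) h2.symm


/-- Let `W` be a 4-dimensional real vector space, `W = P₁ ⊕ P₂` with
`dim P₁ = dim P₂ = 2`, let `F : P₁ → P₂` be a linear isomorphism and `L : P₁ → P₁`
a linear automorphism that is not a real scalar multiple of the identity, and set
`P₃ = graph F`, `P₄ = graph (F ∘ L)`. Then there exists a complex structure `J` on `W`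
for which `P₁, P₂, P₃, P₄` are all complex subspaces if and only if `L` has no real
eigenvalue. -/
theorem stmt_1 (W : Type*) [AddCommGroup W] [Module ℝ W]
    (hW : Module.finrank ℝ W = 4)
    (P₁ P₂ : Submodule ℝ W)
    (hP₁ : Module.finrank ℝ P₁ = 2) (hP₂ : Module.finrank ℝ P₂ = 2)
    (hcompl : IsCompl P₁ P₂)
    (F : P₁ →ₗ[ℝ] P₂) (hF : Function.Bijective F)
    (L : P₁ →ₗ[ℝ] P₁) (hL : Function.Bijective L)
    (hLid : ∀ c : ℝ, L ≠ c • LinearMap.id)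
    (P₃ P₄ : Submodule ℝ W)
    (hP₃ : P₃ = LinearMap.range (P₁.subtype + P₂.subtype ∘ₗ F))
    (hP₄ : P₄ = LinearMap.range (P₁.subtype + P₂.subtype ∘ₗ (F ∘ₗ L))) :
    (∃ J : W →ₗ[ℝ] W, (∀ x, J (J x) = -x) ∧
        (∀ x ∈ P₁, J x ∈ P₁) ∧ (∀ x ∈ P₂, J x ∈ P₂) ∧
        (∀ x ∈ P₃, J x ∈ P₃) ∧ (∀ x ∈ P₄, J x ∈ P₄)) ↔
      ∀ c : ℝ, ¬ Module.End.HasEigenvalue (L : Module.End ℝ P₁) c := by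
  have hmem3 : ∀ w : W, w ∈ P₃ ↔ ∃ a : P₁, (a : W) + (F a : W) = w := by
    intro w
    rw [hP₃]
    constructor
    · rintro ⟨a, rfl⟩; exact ⟨a, by simp⟩
    · rintro ⟨a, rfl⟩; exact ⟨a, by simp⟩
  have hmem4 : ∀ w : W, w ∈ P₄ ↔ ∃ a : P₁, (a : W) + (F (L a) : W) = w := by
    intro w
    rw [hP₄]
    constructor
    · rintro ⟨a, rfl⟩; exact ⟨a, by simp⟩
    · rintro ⟨a, rfl⟩; exact ⟨a, by simp⟩
  constructor
  · rintro ⟨J, hJJ, h1, h2, h3, h4⟩ c hc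
    obtain ⟨v, hv⟩ := hc.exists_hasEigenvector
    have hv0 : v ≠ 0 := hv.2
    have hLv : L v = c • v := hv.apply_eq_smul
    -- J restricted to P₁ resp. P₂
    set j₁ : P₁ → P₁ := fun a => ⟨J a, h1 a (SetLike.coe_mem a)⟩ with hj₁
    set j₂ : P₂ → P₂ := fun b => ⟨J b, h2 b (SetLike.coe_mem b)⟩ with hj₂
    have hj₁coe : ∀ a : P₁, (j₁ a : W) = J a := fun a => rfl
    have hj₂coe : ∀ b : P₂, (j₂ b : W) = J b := fun b => rfl
    -- key compatibility from P₃ invariance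
    have key3 : ∀ a : P₁, j₁ a = (fun y => y) (j₁ a) ∧ j₂ (F a) = F (j₁ a) := by
      intro a
      have hmem : ((a : W) + (F a : W)) ∈ P₃ := (hmem3 _).mpr ⟨a, rfl⟩
      obtain ⟨y, hy⟩ := (hmem3 _).mp (h3 _ hmem)
      have hJsum : J ((a : W) + (F a : W)) = (j₁ a : W) + (j₂ (F a) : W) := by
        rw [map_add, hj₁coe, hj₂coe]
      have := decomp_uniq hcompl y (j₁ a) (F y) (j₂ (F a)) (by rw [hy, hJsum])
      exact ⟨rfl, by rw [← this.2, this.1]⟩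
    have key4 : ∀ a : P₁, j₂ (F (L a)) = F (L (j₁ a)) := by
      intro a
      have hmem : ((a : W) + (F (L a) : W)) ∈ P₄ := (hmem4 _).mpr ⟨a, rfl⟩
      obtain ⟨y, hy⟩ := (hmem4 _).mp (h4 _ hmem)
      have hJsum : J ((a : W) + (F (L a) : W)) = (j₁ a : W) + (j₂ (F (L a)) : W) := by
        rw [map_add, hj₁coe, hj₂coe]
      have := decomp_uniq hcompl y (j₁ a) (F (L y)) (j₂ (F (L a))) (by rw [hy, hJsum])
      rw [← this.2, this.1]
    -- j₁ commutes with L (pointwise at v suffices)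
    have hcomm : j₁ (L v) = L (j₁ v) := by
      have e1 : j₂ (F (L v)) = F (j₁ (L v)) := (key3 (L v)).2
      have e2 : j₂ (F (L v)) = F (L (j₁ v)) := key4 v
      exact hF.1 (e1.symm.trans e2)
    -- j₁ v is an eigenvector of L with eigenvalue c
    set w : P₁ := j₁ v with hw
    have hLw : L w = c • w := by
      have h' : j₁ (L v) = c • w := by
        apply Subtype.ext
        calc (j₁ (L v) : W) = J ((L v : P₁) : W) := rfl
          _ = J (c • (v : W)) := by rw [hLv]; norm_cast
          _ = c • J (v : W) := map_smul J c _
          _ = ((c • w : P₁) : W) := by rw [hw]; push_cast [hj₁coe]; rfl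
      rw [← hcomm, h']
    have hJw : (j₁ w : W) = -(v : W) := by
      rw [hj₁coe, hj₁coe]
      exact hJJ _
    by_cases hdep : ∃ t : ℝ, w = t • v
    · obtain ⟨t, ht⟩ := hdep
      have : -(v : W) = (t * t) • (v : W) := by
        rw [← hJw, ht]
        have hsm : (j₁ (t • v) : W) = t • (j₁ v : W) := by
          rw [hj₁coe, hj₁coe]
          push_cast
          rw [map_smul]
        rw [hsm, ← hw, ht]
        push_cast
        rw [smul_smul]
      have hv0' : (v : W) ≠ 0 := fun h => hv0 (Subtype.ext h)
      have : (t * t + 1) • (v : W) = 0 := by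
        rw [add_smul, one_smul, ← this]; abel
      have := (smul_eq_zero.mp this).resolve_right hv0'
      nlinarith
    · -- v, w linearly independent ⇒ L = c • id
      have li : LinearIndependent ℝ ![v, w] := by
        rw [LinearIndependent.pair_iff' hv0]
        intro t ht
        exact hdep ⟨t, ht.symm⟩
      have card : Fintype.card (Fin 2) = Module.finrank ℝ P₁ := by simp [hP₁]
      have hspan : Submodule.span ℝ (Set.range ![v, w]) = ⊤ :=
        li.span_eq_top_of_card_eq_finrank card
      have hall : ∀ x : P₁, L x = c • x := by
        intro x
        have hx : x ∈ Submodule.span ℝ (Set.range ![v, w]) := hspan ▸ Submodule.mem_top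
        induction hx using Submodule.span_induction with
        | mem y hy =>
            obtain ⟨i, rfl⟩ := hy
            fin_cases i
            · simpa using hLv
            · simpa using hLw
        | zero => simp
        | add y z _ _ hy hz => rw [map_add, hy, hz, smul_add]
        | smul t y _ hy => rw [map_smul, hy, smul_comm]
      exact hLid c (LinearMap.ext fun x => by rw [hall x]; rfl)
  · intro hno
    obtain ⟨K, hK2, hKL⟩ := exists_cstruct hP₁ L hno
    set e : P₁ ≃ₗ[ℝ] P₂ := LinearEquiv.ofBijective F hF with he
    have heF : ∀ a : P₁, e a = F a := fun a => rfl
    set π₁ := P₁.projectionOnto P₂ hcompl with hπ₁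
    set π₂ := P₂.projectionOnto P₁ hcompl.symm with hπ₂
    set J : W →ₗ[ℝ] W :=
      P₁.subtype ∘ₗ K ∘ₗ π₁ +
      P₂.subtype ∘ₗ (e.toLinearMap ∘ₗ K ∘ₗ e.symm.toLinearMap) ∘ₗ π₂ with hJ
    have hπ : ∀ (a : P₁) (b : P₂), π₁ ((a : W) + b) = a ∧ π₂ ((a : W) + b) = b := by
      intro a b
      constructor
      · rw [map_add]
        rw [Submodule.projectionOnto_apply_left hcompl a,
          Submodule.projectionOnto_apply_right hcompl b, add_zero]
      · rw [map_add]
        rw [Submodule.projectionOnto_apply_left hcompl.symm b,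
          Submodule.projectionOnto_apply_right hcompl.symm a, zero_add]
    have hJab : ∀ (a : P₁) (b : P₂),
        J ((a : W) + b) = (K a : W) + (e (K (e.symm b)) : W) := by
      intro a b
      rw [hJ]
      simp only [LinearMap.add_apply, LinearMap.comp_apply, Submodule.subtype_apply,
        LinearEquiv.coe_coe]
      rw [(hπ a b).1, (hπ a b).2]
    refine ⟨J, ?_, ?_, ?_, ?_, ?_⟩
    · intro x
      have hx : ((π₁ x : W) + (π₂ x : W)) = x :=
        Submodule.projection_add_projection_eq_self hcompl x
      calc J (J x) = J (J ((π₁ x : W) + (π₂ x : W))) := by rw [hx]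
        _ = J ((K (π₁ x) : W) + (e (K (e.symm (π₂ x))) : W)) := by rw [hJab]
        _ = (K (K (π₁ x)) : W) + (e (K (e.symm (e (K (e.symm (π₂ x)))))) : W) := by rw [hJab]
        _ = -x := by
            rw [e.symm_apply_apply, hK2, hK2]
            simp only [map_neg, LinearEquiv.apply_symm_apply, Submodule.coe_neg]
            conv_rhs => rw [← hx]
            abel
    · intro x hx
      have : ((⟨x, hx⟩ : P₁) : W) + ((0 : P₂) : W) = x := by simp
      rw [← this, hJab]
      simp only [map_zero]
      simpa using SetLike.coe_mem (K ⟨x, hx⟩)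
    · intro x hx
      have : ((0 : P₁) : W) + ((⟨x, hx⟩ : P₂) : W) = x := by simp
      rw [← this, hJab]
      simp only [map_zero]
      simpa using SetLike.coe_mem (e (K (e.symm ⟨x, hx⟩)))
    · intro x hx
      obtain ⟨a, ha⟩ := (hmem3 x).mp hx
      rw [← ha, hJab]
      refine (hmem3 _).mpr ⟨K a, ?_⟩
      have : e.symm (F a) = a := by rw [← heF, e.symm_apply_apply]
      rw [this, heF]
    · intro x hx
      obtain ⟨a, ha⟩ := (hmem4 x).mp hx
      rw [← ha, hJab]
      refine (hmem4 _).mpr ⟨K a, ?_⟩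
      have : e.symm (F (L a)) = L a := by rw [← heF, e.symm_apply_apply]
      rw [this, hKL, heF]
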